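/- Consider the model D = P[0,1] and let ν ∈ P[0,1] with m(ν) the minimum of its closed support. Then Linf≤(m(ν),ν) = ln(1/ν({m(ν)})) (equal to +∞ when ν({m(ν)}) = 0), while Linf<(m(ν),ν) = +∞. -/

import Mathlib

open MeasureTheory Filter Set ProbabilityTheory
open scoped ENNReal NNReal

noncomputable section

/-- Mean of a (probability) measure on ℝ. -/
def Emean (ν : Measure ℝ) : ℝ := ∫ x, x ∂ν

open Classical in
/-- Kullback–Leibler divergence `∫ ln (dζ/dν) dζ`, equal to `+∞` if `ζ` is not absolutely
continuous with respect to `ν` (or the integral is not defined). -/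
def KL (ζ ν : Measure ℝ) : ℝ≥0∞ :=
  if ζ ≪ ν ∧ Integrable (fun x => Real.log ((ζ.rnDeriv ν x).toReal)) ζ
  then ENNReal.ofReal (∫ x, Real.log ((ζ.rnDeriv ν x).toReal) ∂ζ)
  else ⊤

/-- Log-moment generating function `φ_ν`, with values in `EReal` (so that `+∞` is allowed). -/
def logMgf (ν : Measure ℝ) (l : ℝ) : EReal :=
  ENNReal.log (∫⁻ x, ENNReal.ofReal (Real.exp (l * x)) ∂ν)

/-- Fenchel–Legendre transform `φ*_ν(x) = sup_λ (λ x − φ_ν(λ))`. -/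
def phiStar (ν : Measure ℝ) (x : ℝ) : EReal :=
  ⨆ l : ℝ, ((l * x : ℝ) : EReal) - logMgf ν l

/-- `Φ(ν', ν) = inf_{x ∈ [E(ν'), E(ν)]} (φ*_{ν'}(x) + φ*_ν(x))`. -/
def Phi (ν' ν : Measure ℝ) : EReal :=
  ⨅ x ∈ Set.Icc (Emean ν') (Emean ν), (phiStar ν' x + phiStar ν x)

/-- The model `P[0,1]` of all Borel probability measures on `[0,1]` (seen as measures on ℝ). -/
def Pcc : Set (Measure ℝ) :=
  {ζ | IsProbabilityMeasure ζ ∧ ζ (Set.Icc (0:ℝ) 1)ᶜ = 0}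

/-- `Linf<(x, ν) = inf {KL(ζ, ν) : ζ ∈ D, E(ζ) < x}`, with `inf ∅ = +∞`. -/
def Linflt (D : Set (Measure ℝ)) (x : ℝ) (ν : Measure ℝ) : ℝ≥0∞ :=
  ⨅ ζ ∈ {ζ ∈ D | Emean ζ < x}, KL ζ ν

/-- `Linf≤(x, ν) = inf {KL(ζ, ν) : ζ ∈ D, E(ζ) ≤ x}`, with `inf ∅ = +∞`. -/
def Linfle (D : Set (Measure ℝ)) (x : ℝ) (ν : Measure ℝ) : ℝ≥0∞ :=
  ⨅ ζ ∈ {ζ ∈ D | Emean ζ ≤ x}, KL ζ ν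

/-- `Linf>(x, ν) = inf {KL(ζ, ν) : ζ ∈ D, E(ζ) > x}`, with `inf ∅ = +∞`. -/
def Linfgt (D : Set (Measure ℝ)) (x : ℝ) (ν : Measure ℝ) : ℝ≥0∞ :=
  ⨅ ζ ∈ {ζ ∈ D | x < Emean ζ}, KL ζ ν

/-- `Linf≥(x, ν) = inf {KL(ζ, ν) : ζ ∈ D, E(ζ) ≥ x}`, with `inf ∅ = +∞`. -/
def Linfge (D : Set (Measure ℝ)) (x : ℝ) (ν : Measure ℝ) : ℝ≥0∞ :=
  ⨅ ζ ∈ {ζ ∈ D | x ≤ Emean ζ}, KL ζ ν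

/-- Closed support of a measure on ℝ. -/
def msupport (ν : Measure ℝ) : Set ℝ := {x | ∀ U ∈ nhds x, ν U ≠ 0}

/-- Lower end `m(ν)` of the closed support of `ν`. -/
def mMin (ν : Measure ℝ) : ℝ := sInf (msupport ν)

/-- Upper end `M(ν)` of the closed support of `ν`. -/
def mMax (ν : Measure ℝ) : ℝ := sSup (msupport ν)

section AuxLemmas

variable {ν ζ : Measure ℝ}

lemma msupport_compl_null (ν : Measure ℝ) : ν (msupport ν)ᶜ = 0 := by
  apply measure_null_of_locally_null
  intro x hx
  simp only [msupport, mem_compl_iff, mem_setOf_eq, not_forall] at hx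
  obtain ⟨U, hU, hU0⟩ := hx
  rw [not_ne_iff] at hU0
  exact ⟨U, nhdsWithin_le_nhds hU, hU0⟩

lemma isClosed_msupport (ν : Measure ℝ) : IsClosed (msupport ν) := by
  rw [← isOpen_compl_iff, isOpen_iff_mem_nhds]
  intro x hx
  simp only [msupport, mem_compl_iff, mem_setOf_eq, not_forall] at hx
  obtain ⟨U, hU, hU0⟩ := hx
  rw [not_ne_iff] at hU0
  refine Filter.mem_of_superset (interior_mem_nhds.2 hU) ?_
  intro y hy hysupp
  exact hysupp U (mem_interior_iff_mem_nhds.1 hy) hU0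

lemma msupport_subset_Icc (hν : ν ∈ Pcc) : msupport ν ⊆ Icc (0:ℝ) 1 := by
  intro x hx
  by_contra hxI
  exact hx _ (isClosed_Icc.isOpen_compl.mem_nhds hxI) hν.2

lemma msupport_nonempty (hν : ν ∈ Pcc) : (msupport ν).Nonempty := by
  haveI := hν.1
  by_contra h
  rw [not_nonempty_iff_eq_empty] at h
  have h0 := msupport_compl_null ν
  rw [h, compl_empty, measure_univ] at h0
  exact one_ne_zero h0

lemma mMin_mem_msupport (hν : ν ∈ Pcc) : mMin ν ∈ msupport ν :=
  (isClosed_msupport ν).csInf_mem (msupport_nonempty hν)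
    ⟨0, fun x hx => (msupport_subset_Icc hν hx).1⟩

lemma mMin_mem_Icc (hν : ν ∈ Pcc) : mMin ν ∈ Icc (0:ℝ) 1 :=
  msupport_subset_Icc hν (mMin_mem_msupport hν)

lemma Iio_mMin_null (hν : ν ∈ Pcc) : ν (Iio (mMin ν)) = 0 := by
  refine measure_mono_null (fun x hx => ?_) (msupport_compl_null ν)
  exact notMem_of_lt_csInf hx ⟨0, fun y hy => (msupport_subset_Icc hν hy).1⟩

lemma integrable_id_Pcc (hζ : ζ ∈ Pcc) : Integrable (fun x : ℝ => x) ζ := by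
  haveI := hζ.1
  refine Integrable.mono' (integrable_const 1) measurable_id.aestronglyMeasurable ?_
  have h : ∀ᵐ x ∂ζ, x ∈ Icc (0:ℝ) 1 := by
    rw [ae_iff]
    have : {x : ℝ | ¬ x ∈ Icc (0:ℝ) 1} = (Icc (0:ℝ) 1)ᶜ := rfl
    rw [this]; exact hζ.2
  filter_upwards [h] with x hx
  rw [Real.norm_eq_abs, abs_le]
  exact ⟨by linarith [hx.1], hx.2⟩

lemma ae_ge_of_Iio_null {m : ℝ} (h0 : ζ (Iio m) = 0) : ∀ᵐ x ∂ζ, m ≤ x := by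
  rw [ae_iff]
  have : {x : ℝ | ¬ m ≤ x} = Iio m := by ext x; simp [not_le]
  rw [this]; exact h0

lemma Emean_ge (hζ : ζ ∈ Pcc) {m : ℝ} (h0 : ζ (Iio m) = 0) : m ≤ Emean ζ := by
  haveI := hζ.1
  calc m = ∫ _, m ∂ζ := by
        rw [integral_const, probReal_univ, one_smul]
    _ ≤ ∫ x, x ∂ζ :=
        integral_mono_ae (integrable_const m) (integrable_id_Pcc hζ) (ae_ge_of_Iio_null h0)

lemma eq_dirac_of_Emean_le (hζ : ζ ∈ Pcc) (hν : ν ∈ Pcc) (hac : ζ ≪ ν)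
    (hE : Emean ζ ≤ mMin ν) : ζ = Measure.dirac (mMin ν) := by
  haveI := hζ.1
  set m := mMin ν with hm
  have h0 : ζ (Iio m) = 0 := hac (Iio_mMin_null hν)
  have hge : ∀ᵐ x ∂ζ, m ≤ x := ae_ge_of_Iio_null h0
  have hint : Integrable (fun x => x - m) ζ := (integrable_id_Pcc hζ).sub (integrable_const m)
  have hnn : 0 ≤ᵐ[ζ] fun x => x - m := hge.mono fun x hx => sub_nonneg.2 hx
  have hval : ∫ x, (x - m) ∂ζ = Emean ζ - m := by
    rw [integral_sub (integrable_id_Pcc hζ) (integrable_const m), integral_const, probReal_univ,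
      one_smul]
    rfl
  have hzero : ∫ x, (x - m) ∂ζ = 0 :=
    le_antisymm (by rw [hval]; linarith) (integral_nonneg_of_ae hnn)
  have haezero := (integral_eq_zero_iff_of_nonneg_ae hnn hint).mp hzero
  have haem : ∀ᵐ x ∂ζ, x = m := by
    filter_upwards [haezero] with x hx
    have : x - m = 0 := hx
    linarith
  have hcompl : ζ {m}ᶜ = 0 := by
    have h2 := ae_iff.mp haem
    have he : {x : ℝ | ¬ x = m} = ({m}ᶜ : Set ℝ) := by ext x; simp
    rwa [he] at h2
  have h1 : ζ {m} = 1 := by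
    have := measure_add_measure_compl (μ := ζ) (measurableSet_singleton m)
    rw [hcompl, add_zero, measure_univ] at this
    exact this
  ext s hs
  rw [Measure.dirac_apply]
  by_cases hms : m ∈ s
  · rw [indicator_of_mem hms]
    refine le_antisymm (le_trans (measure_mono (subset_univ s)) (by rw [measure_univ]; rfl)) ?_
    calc (1 : ℝ≥0∞) = ζ {m} := h1.symm
      _ ≤ ζ s := measure_mono (singleton_subset_iff.2 hms)
  · rw [indicator_of_notMem hms]
    refine measure_mono_null (fun x hx => ?_) hcompl
    intro hxm
    rw [mem_singleton_iff] at hxm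
    exact hms (hxm ▸ hx)

lemma dirac_ac {m : ℝ} (hp : ν {m} ≠ 0) : Measure.dirac m ≪ ν := by
  intro s hs
  have hm : m ∉ s := fun h => hp (measure_mono_null (singleton_subset_iff.2 h) hs)
  rw [Measure.dirac_apply, indicator_of_notMem hm]

lemma dirac_eq_withDensity {m : ℝ} [IsProbabilityMeasure ν] (hp : ν {m} ≠ 0) :
    Measure.dirac m = ν.withDensity (Set.indicator ({m} : Set ℝ) fun _ => (ν {m})⁻¹) := by
  have hpt : ν {m} ≠ ⊤ := measure_ne_top ν _
  ext s hs
  rw [withDensity_apply _ hs, Measure.dirac_apply,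
    lintegral_indicator (measurableSet_singleton m), Measure.restrict_restrict
      (measurableSet_singleton m), lintegral_const, Measure.restrict_apply MeasurableSet.univ,
    univ_inter]
  by_cases hms : m ∈ s
  · have : {m} ∩ s = {m} := inter_eq_left.2 (singleton_subset_iff.2 hms)
    rw [this, indicator_of_mem hms, ENNReal.inv_mul_cancel hp hpt]
    rfl
  · have : {m} ∩ s = (∅ : Set ℝ) := by
      rw [singleton_inter_eq_empty]; exact hms
    rw [this, indicator_of_notMem hms, measure_empty, mul_zero]

lemma KL_dirac_eq {m : ℝ} [IsProbabilityMeasure ν] (hp : ν {m} ≠ 0) :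
    KL (Measure.dirac m) ν = ENNReal.ofReal (- Real.log (ν {m}).toReal) := by
  have hpt : ν {m} ≠ ⊤ := measure_ne_top ν _
  set c : ℝ≥0∞ := (ν {m})⁻¹ with hc
  have hf : Measurable (Set.indicator ({m} : Set ℝ) fun _ : ℝ => c) :=
    measurable_const.indicator (measurableSet_singleton m)
  have heq : (Measure.dirac m).rnDeriv ν =ᵐ[ν] Set.indicator ({m} : Set ℝ) fun _ => c := by
    have h := Measure.rnDeriv_withDensity ν hf
    rw [← dirac_eq_withDensity hp] at h
    exact h
  have hac : Measure.dirac m ≪ ν := dirac_ac hp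
  have hxm : ∀ᵐ x ∂(Measure.dirac m), x = m :=
    (ae_dirac_iff (measurableSet_singleton m)).mpr rfl
  have hconst : (fun x => Real.log (((Measure.dirac m).rnDeriv ν x).toReal))
      =ᵐ[Measure.dirac m] fun _ => Real.log c.toReal := by
    filter_upwards [hac.ae_le heq, hxm] with x hx hxm'
    rw [hx, hxm', indicator_of_mem (mem_singleton m)]
  have hint : Integrable (fun x => Real.log (((Measure.dirac m).rnDeriv ν x).toReal))
      (Measure.dirac m) := (integrable_const (Real.log c.toReal)).congr hconst.symm
  have hI : ∫ x, Real.log (((Measure.dirac m).rnDeriv ν x).toReal) ∂(Measure.dirac m)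
      = Real.log c.toReal := by
    rw [integral_congr_ae hconst, integral_const, probReal_univ, one_smul]
  rw [KL, if_pos ⟨hac, hint⟩, hI, hc, ENNReal.toReal_inv, Real.log_inv]

end AuxLemmas

/-- For the model `P[0,1]` and `ν ∈ P[0,1]` with `m(ν)` the minimum of its closed support:
`Linf≤(m(ν),ν) = ln(1/ν({m(ν)})) = − ln ν({m(ν)})` (equal to `+∞` when `ν({m(ν)}) = 0`),
while `Linf<(m(ν),ν) = +∞`. -/
theorem Linf_at_mMin (ν : Measure ℝ) (hν : ν ∈ Pcc) :
    (Linfle Pcc (mMin ν) ν : EReal) = - ENNReal.log (ν {mMin ν}) ∧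
    Linflt Pcc (mMin ν) ν = ⊤ := by
  haveI := hν.1
  set m := mMin ν with hm
  have hmI : m ∈ Icc (0:ℝ) 1 := mMin_mem_Icc hν
  constructor
  · -- Linfle
    by_cases hp : ν {m} = 0
    · have hall : ∀ ζ ∈ {ζ ∈ Pcc | Emean ζ ≤ m}, KL ζ ν = ⊤ := by
        intro ζ hζ
        rw [KL, if_neg]
        rintro ⟨hac, -⟩
        have hζd := eq_dirac_of_Emean_le hζ.1 hν hac hζ.2
        have h1 : ζ {m} = 1 := by
          rw [hζd, Measure.dirac_apply, indicator_of_mem (mem_singleton m)]; rfl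
        rw [hac hp] at h1
        exact zero_ne_one h1
      have htop : Linfle Pcc m ν = ⊤ :=
        le_antisymm le_top (le_iInf₂ fun ζ hζ => (hall ζ hζ).ge)
      rw [htop, hp]
      simp
    · have hdiracP : Measure.dirac m ∈ Pcc := by
        refine ⟨inferInstance, ?_⟩
        rw [Measure.dirac_apply, indicator_of_notMem (by simpa using hmI)]
      have hEd : Emean (Measure.dirac m) = m := by
        rw [Emean, integral_dirac]
      have key : ∀ ζ ∈ {ζ ∈ Pcc | Emean ζ ≤ m}, KL (Measure.dirac m) ν ≤ KL ζ ν := by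
        intro ζ hζ
        by_cases h : ζ ≪ ν ∧ Integrable (fun x => Real.log ((ζ.rnDeriv ν x).toReal)) ζ
        · have hζd := eq_dirac_of_Emean_le hζ.1 hν h.1 hζ.2
          rw [hζd]
        · have hT : KL ζ ν = ⊤ := by rw [KL, if_neg h]
          rw [hT]; exact le_top
      have hinf : Linfle Pcc m ν = KL (Measure.dirac m) ν :=
        le_antisymm (iInf₂_le (Measure.dirac m) ⟨hdiracP, hEd.le⟩) (le_iInf₂ key)
      rw [hinf, KL_dirac_eq hp]
      have hpt : ν {m} ≠ ⊤ := measure_ne_top ν _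
      rw [ENNReal.log, if_neg hp, if_neg hpt]
      have h1 : (ν {m}).toReal ≤ 1 := by
        apply ENNReal.toReal_le_of_le_ofReal zero_le_one
        simpa using prob_le_one (μ := ν) (s := {m})
      have ht : 0 ≤ -Real.log (ν {m}).toReal :=
        neg_nonneg.2 (Real.log_nonpos ENNReal.toReal_nonneg h1)
      rw [EReal.coe_ennreal_ofReal, max_eq_left ht]
      exact_mod_cast rfl
  · -- Linflt
    have hall : ∀ ζ ∈ {ζ ∈ Pcc | Emean ζ < m}, KL ζ ν = ⊤ := by
      intro ζ hζ
      rw [KL, if_neg]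
      rintro ⟨hac, -⟩
      have h0 : ζ (Iio m) = 0 := hac (Iio_mMin_null hν)
      exact absurd (Emean_ge hζ.1 h0) (not_le.2 hζ.2)
    exact le_antisymm le_top (le_iInf₂ fun ζ hζ => (hall ζ hζ).ge)

end
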